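/- For all natural numbers n ≥ k, if c is a positive integer such that c·P^{(k)} is integer-valued for every integer-valued polynomial P of degree ≤ n, then k!·c is a multiple of q_{n,k} := lcm{ i_1 i_2 ⋯ i_k : i_1,...,i_k positive integers with i_1 + ⋯ + i_k ≤ n }. -/

import Mathlib

open Polynomial

/-- A polynomial `P ∈ ℚ[X]` is integer-valued if it takes integer values at all integers. -/
def IntValued (P : Polynomial ℚ) : Prop := ∀ m : ℤ, ∃ z : ℤ, P.eval (m : ℚ) = (z : ℚ)

/-- binomial polynomial -/
noncomputable def Bpoly (i : ℕ) : ℚ[X] := C ((i.factorial : ℚ)⁻¹) * descPochhammer ℚ i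

lemma Bpoly_ne_zero (i : ℕ) : Bpoly i ≠ 0 :=
  mul_ne_zero (by simp [Nat.factorial_ne_zero]) (monic_descPochhammer ℚ i).ne_zero

lemma Bpoly_natDegree (i : ℕ) : (Bpoly i).natDegree = i := by
  rw [Bpoly, natDegree_C_mul (by simp [Nat.factorial_ne_zero]), descPochhammer_natDegree]

lemma factorial_dvd_descPochhammer_eval (i : ℕ) (m : ℤ) :
    (i.factorial : ℤ) ∣ (descPochhammer ℤ i).eval m := by
  rcases le_or_gt 0 m with hm | hm
  · obtain ⟨a, rfl⟩ := Int.eq_ofNat_of_zero_le hm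
    rw [descPochhammer_eval_eq_descFactorial ℤ a i]
    exact_mod_cast Int.natCast_dvd_natCast.mpr (Nat.factorial_dvd_descFactorial a i)
  · have key : (ascPochhammer ℤ i).eval (-m) = (-1) ^ i * (descPochhammer ℤ i).eval m :=
      ascPochhammer_eval_neg_eq_descPochhammer (R := ℤ) m i
    have h2 : (descPochhammer ℤ i).eval m = (-1) ^ i * (ascPochhammer ℤ i).eval (-m) := by
      rw [key, ← mul_assoc, ← mul_pow]; simp
    obtain ⟨a, ha⟩ := Int.eq_ofNat_of_zero_le (by omega : (0:ℤ) ≤ -m)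
    have h3 : (ascPochhammer ℤ i).eval (-m) = ((a.ascFactorial i : ℕ) : ℤ) := by
      rw [ha]
      rw [show ((a:ℤ)) = ((a:ℕ):ℤ) from rfl]
      rw [← ascPochhammer_nat_eq_ascFactorial a i]
      simp [← ascPochhammer_eval_cast]
    rw [h2, h3]
    exact Dvd.dvd.mul_left (Int.natCast_dvd_natCast.mpr (Nat.factorial_dvd_ascFactorial a i)) _

lemma Bpoly_intValued (i : ℕ) : IntValued (Bpoly i) := by
  intro m
  obtain ⟨z, hz⟩ := factorial_dvd_descPochhammer_eval i m
  refine ⟨z, ?_⟩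
  have : (descPochhammer ℚ i).eval (m : ℚ) = (((descPochhammer ℤ i).eval m : ℤ) : ℚ) :=
    (descPochhammer_eval_cast (R := ℚ) i m).symm
  rw [Bpoly, eval_mul, eval_C, this, hz]
  push_cast
  rw [← mul_assoc, inv_mul_cancel₀ (by exact_mod_cast Nat.factorial_ne_zero i), one_mul]

lemma descPochhammer_eval_neg_one (m : ℕ) :
    (descPochhammer ℚ m).eval (-1) = (-1) ^ m * m.factorial := by
  induction m with
  | zero => simp
  | succ m ih =>
    rw [descPochhammer_succ_eval, ih, Nat.factorial_succ]
    push_cast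
    ring

noncomputable def Rpoly (i : ℕ) : ℚ[X] :=
  C ((i.factorial : ℚ)⁻¹) * (descPochhammer ℚ (i - 1)).comp (X - 1)

lemma Bpoly_eq (i : ℕ) (hi : i ≠ 0) : Bpoly i = X * Rpoly i := by
  obtain ⟨m, rfl⟩ := Nat.exists_eq_succ_of_ne_zero hi
  rw [Bpoly, Rpoly, descPochhammer_succ_left]
  simp only [Nat.succ_sub_one]
  ring

lemma Rpoly_eval_zero (i : ℕ) (hi : i ≠ 0) :
    (Rpoly i).eval 0 = (-1) ^ (i - 1) * (i : ℚ)⁻¹ := by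
  obtain ⟨m, rfl⟩ := Nat.exists_eq_succ_of_ne_zero hi
  rw [Rpoly, eval_mul, eval_C, eval_comp]
  simp only [eval_sub, eval_X, eval_one, zero_sub, Nat.succ_sub_one]
  rw [descPochhammer_eval_neg_one, Nat.factorial_succ]
  have h1 : ((m.factorial : ℚ)) ≠ 0 := by exact_mod_cast Nat.factorial_ne_zero m
  have h2 : ((m : ℚ) + 1) ≠ 0 := by positivity
  push_cast
  field_simp

lemma intValued_prod {ι : Type*} (s : Finset ι) (g : ι → ℚ[X])
    (hg : ∀ i ∈ s, IntValued (g i)) : IntValued (∏ i ∈ s, g i) := by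
  intro m
  choose z hz using fun i (hi : i ∈ s) => hg i hi m
  classical
  refine ⟨∏ i ∈ s.attach, z i i.2, ?_⟩
  rw [eval_prod, ← Finset.prod_attach s fun i => (g i).eval (m:ℚ)]
  push_cast
  exact Finset.prod_congr rfl fun i _ => hz i i.2

/-- `q n k` is the lcm of all products `i₁⋯i_k` over `k`-tuples of positive integers
with `i₁ + ⋯ + i_k ≤ n` (with `q n 0 = 1`). -/
def q (n k : ℕ) : ℕ :=
  ((Finset.range (n + 1)).biUnion
      (fun m => (Finset.Nat.antidiagonalTuple k m).filter (fun f => ∀ j, f j ≠ 0))).lcm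
    (fun f => ∏ j, f j)

set_option linter.unusedVariables false in
theorem q_dvd_factorial_mul (n k : ℕ) (hkn : k ≤ n) (c : ℕ) (hc : 0 < c)
    (h : ∀ P : Polynomial ℚ, IntValued P → P.natDegree ≤ n →
      IntValued (C (c : ℚ) * derivative^[k] P)) :
    q n k ∣ k.factorial * c := by
  apply Finset.lcm_dvd
  intro f hf
  simp only [Finset.mem_biUnion, Finset.mem_filter, Finset.mem_range] at hf
  obtain ⟨m, hm, hfm, hpos⟩ := hf
  have hsum : ∑ j, f j = m := Finset.Nat.mem_antidiagonalTuple.mp hfm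
  set P : ℚ[X] := ∏ j, Bpoly (f j) with hP
  have hPint : IntValued P := intValued_prod _ _ (fun i _ => Bpoly_intValued (f i))
  have hPdeg : P.natDegree ≤ n := by
    rw [hP, natDegree_prod _ _ (fun i _ => Bpoly_ne_zero (f i))]
    simp only [Bpoly_natDegree]
    omega
  have hPX : P = X ^ k * ∏ j, Rpoly (f j) := by
    rw [hP]
    calc ∏ j, Bpoly (f j) = ∏ j : Fin k, (X * Rpoly (f j)) :=
          Finset.prod_congr rfl fun j _ => Bpoly_eq _ (hpos j)
      _ = _ := by
          rw [Finset.prod_mul_distrib, Finset.prod_const, Finset.card_univ, Fintype.card_fin]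
  have hcoeff : P.coeff k = ∏ j, ((-1:ℚ) ^ (f j - 1) * ((f j : ℚ))⁻¹) := by
    rw [hPX]
    have h0 := coeff_X_pow_mul (∏ j, Rpoly (f j)) k 0
    rw [zero_add] at h0
    rw [h0, coeff_zero_eq_eval_zero, eval_prod]
    exact Finset.prod_congr rfl fun j _ => Rpoly_eval_zero _ (hpos j)
  have hDeval : (derivative^[k] P).eval 0 = (k.factorial : ℚ) * P.coeff k := by
    rw [← coeff_zero_eq_eval_zero, coeff_iterate_derivative, zero_add, Nat.descFactorial_self,
      nsmul_eq_mul]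
  set N : ℕ := ∏ j, f j with hN
  set E : ℕ := ∑ j, (f j - 1) with hE
  have hNne : (N : ℚ) ≠ 0 :=
    Nat.cast_ne_zero.mpr (Finset.prod_ne_zero_iff.mpr fun j _ => hpos j)
  have hNinv : ((N : ℚ))⁻¹ = ∏ j, ((f j : ℚ))⁻¹ := by
    rw [hN]; push_cast; exact (Finset.prod_inv_distrib _).symm
  have hprod : ∏ j, ((-1:ℚ) ^ (f j - 1) * ((f j : ℚ))⁻¹) = (-1) ^ E * (N : ℚ)⁻¹ := by
    rw [Finset.prod_mul_distrib, Finset.prod_pow_eq_pow_sum, hNinv, hE]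
  obtain ⟨z, hz⟩ := h P hPint hPdeg 0
  rw [Int.cast_zero, eval_mul, eval_C, hDeval, hcoeff, hprod] at hz
  have hN1 : (N : ℚ)⁻¹ * (N : ℚ) = 1 := inv_mul_cancel₀ hNne
  have h2 : (c : ℚ) * ((k.factorial : ℚ) * (-1) ^ E) = (z : ℚ) * N := by
    linear_combination (N : ℚ) * hz - ((c : ℚ) * (k.factorial : ℚ) * (-1) ^ E) * hN1
  have hsq : ((-1 : ℚ)) ^ E * (-1) ^ E = 1 := by rw [← mul_pow]; norm_num
  have key : ((k.factorial * c : ℕ) : ℚ) = (((-1) ^ E * z * N : ℤ) : ℚ) := by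
    push_cast
    linear_combination ((-1:ℚ)) ^ E * h2 - ((k.factorial : ℚ) * c) * hsq
  have keyZ : ((k.factorial * c : ℕ) : ℤ) = ((-1) ^ E * z) * (N : ℤ) := by
    exact_mod_cast key
  have : (N : ℤ) ∣ ((k.factorial * c : ℕ) : ℤ) := ⟨(-1) ^ E * z, by rw [keyZ]; ring⟩
  exact_mod_cast this
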